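/- arXiv:2008.13708 — 2 statements merged into one kernel-verified Lean document; each statement's English description precedes it below -/
import Mathlib

section
/- For X, Y ∈ B(H), the block diagonal operator T = diag(X, Y) on H ⊕ H satisfies ‖T‖_α ≤ max{ √(‖X‖_α² + α·w(X)²), √(‖Y‖_α² + α·w(Y)²) }. -/
open scoped Matrix

/-- The `α`-norm of a bounded operator `T`:
`‖T‖_α = sup {√(α|⟨Tx,x⟩|² + (1-α)‖Tx‖²) : ‖x‖ = 1}`. -/
noncomputable def alphaNorm {H : Type*} [NormedAddCommGroup H] [InnerProductSpace ℂ H]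
    (α : ℝ) (T : H →L[ℂ] H) : ℝ :=
  sSup {r : ℝ | ∃ x : H, ‖x‖ = 1 ∧
    r = Real.sqrt (α * ‖(inner ℂ (T x) x : ℂ)‖ ^ 2 + (1 - α) * ‖T x‖ ^ 2)}

/-- The numerical radius `w(T) = sup {|⟨Tx,x⟩| : ‖x‖ = 1}`. -/
noncomputable def numRadius {H : Type*} [NormedAddCommGroup H] [InnerProductSpace ℂ H]
    (T : H →L[ℂ] H) : ℝ :=
  sSup {r : ℝ | ∃ x : H, ‖x‖ = 1 ∧ r = ‖(inner ℂ (T x) x : ℂ)‖}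

variable {H : Type*} [NormedAddCommGroup H] [InnerProductSpace ℂ H]

/-- The canonical inclusion `H × H → H ⊕₂ H`. -/
noncomputable def pr (x y : H) : WithLp 2 (H × H) := (WithLp.equiv 2 (H × H)).symm (x, y)

lemma numRadius_bddAbove (X : H →L[ℂ] H) :
    BddAbove {r : ℝ | ∃ x : H, ‖x‖ = 1 ∧ r = ‖(inner ℂ (X x) x : ℂ)‖} := by
  refine ⟨‖X‖, ?_⟩
  rintro r ⟨x, hx, rfl⟩
  calc ‖(inner ℂ (X x) x : ℂ)‖ ≤ ‖X x‖ * ‖x‖ := norm_inner_le_norm _ _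
    _ ≤ ‖X‖ * ‖x‖ * ‖x‖ := by
        have := X.le_opNorm x
        nlinarith [norm_nonneg x]
    _ = ‖X‖ := by rw [hx]; ring

lemma alphaSet_bddAbove (α : ℝ) (hα0 : 0 ≤ α) (hα1 : α ≤ 1) (X : H →L[ℂ] H) :
    BddAbove {r : ℝ | ∃ x : H, ‖x‖ = 1 ∧
      r = Real.sqrt (α * ‖(inner ℂ (X x) x : ℂ)‖ ^ 2 + (1 - α) * ‖X x‖ ^ 2)} := by
  refine ⟨‖X‖, ?_⟩
  rintro r ⟨x, hx, rfl⟩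
  have h1 : ‖(inner ℂ (X x) x : ℂ)‖ ≤ ‖X x‖ := by
    have := norm_inner_le_norm (𝕜 := ℂ) (X x) x
    rw [hx, mul_one] at this; exact this
  have h2 : ‖X x‖ ≤ ‖X‖ := by
    have := X.le_opNorm x
    rw [hx, mul_one] at this; exact this
  have h3 : α * ‖(inner ℂ (X x) x : ℂ)‖ ^ 2 + (1 - α) * ‖X x‖ ^ 2 ≤ ‖X‖ ^ 2 := by
    have hP2 : ‖(inner ℂ (X x) x : ℂ)‖ ^ 2 ≤ ‖X‖ ^ 2 :=
      pow_le_pow_left₀ (norm_nonneg _) (le_trans h1 h2) 2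
    have hN2 : ‖X x‖ ^ 2 ≤ ‖X‖ ^ 2 := pow_le_pow_left₀ (norm_nonneg _) h2 2
    nlinarith [mul_nonneg hα0 (sub_nonneg.mpr hP2),
      mul_nonneg (by linarith : (0:ℝ) ≤ 1 - α) (sub_nonneg.mpr hN2)]
  calc Real.sqrt (α * ‖(inner ℂ (X x) x : ℂ)‖ ^ 2 + (1 - α) * ‖X x‖ ^ 2)
      ≤ Real.sqrt (‖X‖ ^ 2) := Real.sqrt_le_sqrt h3
    _ = ‖X‖ := by rw [Real.sqrt_sq (norm_nonneg X)]

lemma num_le (X : H →L[ℂ] H) {x : H} (hx : ‖x‖ = 1) :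
    ‖(inner ℂ (X x) x : ℂ)‖ ≤ numRadius X :=
  le_csSup (numRadius_bddAbove X) ⟨x, hx, rfl⟩

lemma alpha_le (α : ℝ) (hα0 : 0 ≤ α) (hα1 : α ≤ 1) (X : H →L[ℂ] H) {x : H} (hx : ‖x‖ = 1) :
    α * ‖(inner ℂ (X x) x : ℂ)‖ ^ 2 + (1 - α) * ‖X x‖ ^ 2 ≤ alphaNorm α X ^ 2 := by
  have hmem : Real.sqrt (α * ‖(inner ℂ (X x) x : ℂ)‖ ^ 2 + (1 - α) * ‖X x‖ ^ 2)
      ≤ alphaNorm α X :=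
    le_csSup (alphaSet_bddAbove α hα0 hα1 X) ⟨x, hx, rfl⟩
  have hnn : 0 ≤ α * ‖(inner ℂ (X x) x : ℂ)‖ ^ 2 + (1 - α) * ‖X x‖ ^ 2 := by
    nlinarith [sq_nonneg ‖(inner ℂ (X x) x : ℂ)‖, sq_nonneg ‖X x‖]
  have h0 : (0:ℝ) ≤ alphaNorm α X := le_trans (Real.sqrt_nonneg _) hmem
  calc α * ‖(inner ℂ (X x) x : ℂ)‖ ^ 2 + (1 - α) * ‖X x‖ ^ 2
      = Real.sqrt (α * ‖(inner ℂ (X x) x : ℂ)‖ ^ 2 + (1 - α) * ‖X x‖ ^ 2) ^ 2 := by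
        rw [Real.sq_sqrt hnn]
    _ ≤ alphaNorm α X ^ 2 := by
        exact pow_le_pow_left₀ (Real.sqrt_nonneg _) hmem 2

lemma num_scaled (X : H →L[ℂ] H) (x : H) :
    ‖(inner ℂ (X x) x : ℂ)‖ ≤ ‖x‖ ^ 2 * numRadius X := by
  rcases eq_or_ne x 0 with rfl | hx0
  · simp
  · have ht : 0 < ‖x‖ := norm_pos_iff.mpr hx0
    set u : H := ((‖x‖ : ℂ))⁻¹ • x with hu_def
    have hu : ‖u‖ = 1 := by
      simp [hu_def, norm_smul, abs_of_pos ht, inv_mul_cancel₀ ht.ne']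
    have hP : ‖(inner ℂ (X u) u : ℂ)‖ = ‖x‖⁻¹ * (‖x‖⁻¹ * ‖(inner ℂ (X x) x : ℂ)‖) := by
      simp [hu_def, map_smul, inner_smul_left, inner_smul_right, norm_mul,
        abs_of_pos ht]
      exact Or.inl (mul_comm _ _)
    have := num_le X hu
    rw [hP] at this
    have h2 := mul_le_mul_of_nonneg_left this (by positivity : (0:ℝ) ≤ ‖x‖ ^ 2)
    calc ‖(inner ℂ (X x) x : ℂ)‖
        = ‖x‖ ^ 2 * (‖x‖⁻¹ * (‖x‖⁻¹ * ‖(inner ℂ (X x) x : ℂ)‖)) := by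
          field_simp
      _ ≤ ‖x‖ ^ 2 * numRadius X := h2

lemma alpha_scaled (α : ℝ) (hα0 : 0 ≤ α) (hα1 : α ≤ 1) (X : H →L[ℂ] H) (x : H)
    (hx : ‖x‖ ≤ 1) :
    α * ‖(inner ℂ (X x) x : ℂ)‖ ^ 2 + (1 - α) * ‖X x‖ ^ 2 ≤ ‖x‖ ^ 2 * alphaNorm α X ^ 2 := by
  rcases eq_or_ne x 0 with rfl | hx0
  · simp
  · have ht : 0 < ‖x‖ := norm_pos_iff.mpr hx0
    set u : H := ((‖x‖ : ℂ))⁻¹ • x with hu_def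
    have hu : ‖u‖ = 1 := by
      simp [hu_def, norm_smul, abs_of_pos ht, inv_mul_cancel₀ ht.ne']
    have hP : ‖(inner ℂ (X u) u : ℂ)‖ = ‖x‖⁻¹ * (‖x‖⁻¹ * ‖(inner ℂ (X x) x : ℂ)‖) := by
      simp [hu_def, map_smul, inner_smul_left, inner_smul_right, norm_mul,
        abs_of_pos ht]
      exact Or.inl (mul_comm _ _)
    have hN : ‖X u‖ = ‖x‖⁻¹ * ‖X x‖ := by
      simp [hu_def, map_smul, norm_smul, abs_of_pos ht]
    have hkey := alpha_le α hα0 hα1 X hu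
    rw [hP, hN] at hkey
    set t : ℝ := ‖x‖
    set P : ℝ := ‖(inner ℂ (X x) x : ℂ)‖
    set N : ℝ := ‖X x‖
    have hPn : 0 ≤ P := norm_nonneg _
    have hNn : 0 ≤ N := norm_nonneg _
    -- hkey : α * (t⁻¹ * (t⁻¹ * P))^2 + (1-α) * (t⁻¹ * N)^2 ≤ alphaNorm α X ^ 2
    have h4 : α * (t⁻¹ * (t⁻¹ * P)) ^ 2 + (1 - α) * (t⁻¹ * N) ^ 2
        = (α * P ^ 2 / t ^ 2 + (1 - α) * N ^ 2) / t ^ 2 := by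
      field_simp
    rw [h4] at hkey
    have ht2 : 0 < t ^ 2 := by positivity
    have hkey2 : α * P ^ 2 / t ^ 2 + (1 - α) * N ^ 2 ≤ t ^ 2 * alphaNorm α X ^ 2 := by
      rw [div_le_iff₀ ht2] at hkey
      linarith [hkey]
    have hPt : α * P ^ 2 ≤ α * P ^ 2 / t ^ 2 := by
      rw [le_div_iff₀ ht2]
      have ht1 : t ^ 2 ≤ 1 := by nlinarith
      nlinarith [mul_nonneg (mul_nonneg hα0 (sq_nonneg P)) (sub_nonneg.mpr ht1)]
    linarith

lemma arith_key {α a2 b2 P Q Nx Ny wX wY A2 B2 S : ℝ}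
    (hα0 : 0 ≤ α) (ha2 : 0 ≤ a2) (hb2 : 0 ≤ b2) (hab : a2 + b2 = 1)
    (hPn : 0 ≤ P) (hQn : 0 ≤ Q) (hSn : 0 ≤ S) (hS : S ≤ P + Q)
    (kX : α * P ^ 2 + (1 - α) * Nx ^ 2 ≤ a2 * A2)
    (kY : α * Q ^ 2 + (1 - α) * Ny ^ 2 ≤ b2 * B2)
    (nX : P ≤ a2 * wX) (nY : Q ≤ b2 * wY) :
    α * S ^ 2 + (1 - α) * (Nx ^ 2 + Ny ^ 2)
      ≤ max (A2 + α * wX ^ 2) (B2 + α * wY ^ 2) := by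
  have h1 : α * S ^ 2 ≤ α * (P + Q) ^ 2 :=
    mul_le_mul_of_nonneg_left (pow_le_pow_left₀ hSn hS 2) hα0
  have hPQ : P * Q ≤ (a2 * wX) * (b2 * wY) := mul_le_mul nX nY hQn (le_trans hPn nX)
  have c1 : α * (P * Q) ≤ α * ((a2 * wX) * (b2 * wY)) := mul_le_mul_of_nonneg_left hPQ hα0
  have h2 : 2 * (a2 * wX) * (b2 * wY) ≤ a2 * b2 * (wX ^ 2 + wY ^ 2) := by
    nlinarith [mul_nonneg ha2 hb2, sq_nonneg (wX - wY)]
  have c2 : α * (2 * (a2 * wX) * (b2 * wY)) ≤ α * (a2 * b2 * (wX ^ 2 + wY ^ 2)) :=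
    mul_le_mul_of_nonneg_left h2 hα0
  have hb1 : b2 ≤ 1 := by linarith
  have ha1 : a2 ≤ 1 := by linarith
  have h3 : a2 * b2 * wX ^ 2 ≤ a2 * wX ^ 2 := by
    nlinarith [mul_nonneg ha2 (sq_nonneg wX)]
  have h4 : a2 * b2 * wY ^ 2 ≤ b2 * wY ^ 2 := by
    nlinarith [mul_nonneg hb2 (sq_nonneg wY)]
  have c3 : α * (a2 * b2 * wX ^ 2) ≤ α * (a2 * wX ^ 2) := mul_le_mul_of_nonneg_left h3 hα0
  have c4 : α * (a2 * b2 * wY ^ 2) ≤ α * (b2 * wY ^ 2) := mul_le_mul_of_nonneg_left h4 hα0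
  have hexp : α * (P + Q) ^ 2 = α * P ^ 2 + α * Q ^ 2 + 2 * (α * (P * Q)) := by ring
  have hstep : α * S ^ 2 + (1 - α) * (Nx ^ 2 + Ny ^ 2)
      ≤ a2 * (A2 + α * wX ^ 2) + b2 * (B2 + α * wY ^ 2) := by
    linarith [h1, c1, c2, c3, c4, kX, kY, hexp]
  refine le_trans hstep ?_
  calc a2 * (A2 + α * wX ^ 2) + b2 * (B2 + α * wY ^ 2)
      ≤ a2 * max (A2 + α * wX ^ 2) (B2 + α * wY ^ 2)
        + b2 * max (A2 + α * wX ^ 2) (B2 + α * wY ^ 2) :=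
        add_le_add (mul_le_mul_of_nonneg_left (le_max_left _ _) ha2)
          (mul_le_mul_of_nonneg_left (le_max_right _ _) hb2)
    _ = (a2 + b2) * max (A2 + α * wX ^ 2) (B2 + α * wY ^ 2) := by ring
    _ = max (A2 + α * wX ^ 2) (B2 + α * wY ^ 2) := by rw [hab, one_mul]

lemma norm_le_one_of_sq {a b : ℝ} (ha : 0 ≤ a) (h : a ^ 2 + b ^ 2 = 1) : a ≤ 1 := by
  nlinarith [sq_nonneg b, sq_nonneg (a - 1)]

/-- `‖diag(X, Y)‖_α ≤ max{√(‖X‖_α² + α w(X)²), √(‖Y‖_α² + α w(Y)²)}`. -/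
theorem alphaNorm_diag_upper (α : ℝ) (hα0 : 0 ≤ α) (hα1 : α ≤ 1) (X Y : H →L[ℂ] H)
    (T : WithLp 2 (H × H) →L[ℂ] WithLp 2 (H × H))
    (hT : ∀ x y : H, T (pr x y) = pr (X x) (Y y)) :
    alphaNorm α T ≤ max (Real.sqrt (alphaNorm α X ^ 2 + α * numRadius X ^ 2))
      (Real.sqrt (alphaNorm α Y ^ 2 + α * numRadius Y ^ 2)) := by
  apply Real.sSup_le
  · rintro r ⟨z, hz, rfl⟩
    set x : H := z.fst with hx_def
    set y : H := z.snd with hy_def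
    have hTz : T z = pr (X x) (Y y) := hT x y
    have hfst : (T z).fst = X x := by rw [hTz]; rfl
    have hsnd : (T z).snd = Y y := by rw [hTz]; rfl
    have hip : (inner ℂ (T z) z : ℂ) = inner ℂ (X x) x + inner ℂ (Y y) y := by
      rw [WithLp.prod_inner_apply]
      change inner ℂ (T z).fst x + inner ℂ (T z).snd y = _
      rw [hfst, hsnd]
    have hn : ‖T z‖ ^ 2 = ‖X x‖ ^ 2 + ‖Y y‖ ^ 2 := by
      rw [WithLp.prod_norm_sq_eq_of_L2, hfst, hsnd]
    have hz2 : ‖x‖ ^ 2 + ‖y‖ ^ 2 = 1 := by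
      rw [← WithLp.prod_norm_sq_eq_of_L2, hz]; norm_num
    have hx1 : ‖x‖ ≤ 1 := norm_le_one_of_sq (norm_nonneg x) hz2
    have hy1 : ‖y‖ ≤ 1 := norm_le_one_of_sq (b := ‖x‖) (norm_nonneg y) (by linarith)
    have kX := alpha_scaled α hα0 hα1 X x hx1
    have kY := alpha_scaled α hα0 hα1 Y y hy1
    have nX := num_scaled X x
    have nY := num_scaled Y y
    have hcross : ‖(inner ℂ (X x) x + inner ℂ (Y y) y : ℂ)‖
        ≤ ‖(inner ℂ (X x) x : ℂ)‖ + ‖(inner ℂ (Y y) y : ℂ)‖ := norm_add_le _ _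
    have key : α * ‖(inner ℂ (T z) z : ℂ)‖ ^ 2 + (1 - α) * ‖T z‖ ^ 2
        ≤ max (alphaNorm α X ^ 2 + α * numRadius X ^ 2)
          (alphaNorm α Y ^ 2 + α * numRadius Y ^ 2) := by
      rw [hip, hn]
      exact arith_key hα0 (sq_nonneg ‖x‖) (sq_nonneg ‖y‖) hz2 (norm_nonneg _)
        (norm_nonneg _) (norm_nonneg _) hcross kX kY nX nY
    have hsq := Real.sqrt_le_sqrt key
    refine le_trans hsq ?_
    rcases le_total (alphaNorm α X ^ 2 + α * numRadius X ^ 2)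
        (alphaNorm α Y ^ 2 + α * numRadius Y ^ 2) with h | h
    · rw [max_eq_right h]
      exact le_max_of_le_right le_rfl
    · rw [max_eq_left h]
      exact le_max_of_le_left le_rfl
  · exact le_max_of_le_left (Real.sqrt_nonneg _)
end

section
/- Let X ∈ B(H) and let T = [[0, X],[0, 0]] on H ⊕ H. If α > 1/2 then ‖T‖_α = ‖X‖/(2√α), and if 0 ≤ α ≤ 1/2 then ‖T‖_α = √(1−α)·‖X‖. -/
set_option linter.unusedSectionVars false
set_option maxHeartbeats 1000000


open scoped Matrix

variable {H : Type*} [NormedAddCommGroup H] [InnerProductSpace ℂ H]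

lemma norm_pr_sq (x y : H) : ‖pr x y‖ ^ 2 = ‖x‖ ^ 2 + ‖y‖ ^ 2 := by
  rw [WithLp.prod_norm_sq_eq_of_L2]; rfl

lemma inner_pr (a b x y : H) :
    (inner ℂ (pr a b) (pr x y) : ℂ) = inner ℂ a x + inner ℂ b y := by
  rw [WithLp.prod_inner_apply]; rfl

lemma pr_self (z : WithLp 2 (H × H)) : pr z.fst z.snd = z := rfl

lemma key [Nontrivial H]
    (α : ℝ) (hα0 : 0 ≤ α) (hα1 : α ≤ 1) (X : H →L[ℂ] H)
    (T : WithLp 2 (H × H) →L[ℂ] WithLp 2 (H × H))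
    (hT : ∀ x y : H, T (pr x y) = pr (X y) 0)
    (s₀ : ℝ) (hs0 : 0 ≤ s₀) (hs1 : s₀ ≤ 1)
    (hM : 0 < s₀ * (1 - α * s₀))
    (hmax : ∀ s, 0 ≤ s → s ≤ 1 → s * (1 - α * s) ≤ s₀ * (1 - α * s₀)) :
    alphaNorm α T = ‖X‖ * Real.sqrt (s₀ * (1 - α * s₀)) := by
  set M := s₀ * (1 - α * s₀) with hMdef
  set S := {r : ℝ | ∃ x : WithLp 2 (H × H), ‖x‖ = 1 ∧
    r = Real.sqrt (α * ‖(inner ℂ (T x) x : ℂ)‖ ^ 2 + (1 - α) * ‖T x‖ ^ 2)} with hSdef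
  have halpha : alphaNorm α T = sSup S := rfl
  have hsqrtM : 0 < Real.sqrt M := Real.sqrt_pos.2 hM
  -- compute the value for any element of S
  have hval : ∀ z : WithLp 2 (H × H),
      α * ‖(inner ℂ (T z) z : ℂ)‖ ^ 2 + (1 - α) * ‖T z‖ ^ 2
      = α * ‖(inner ℂ (X z.snd) z.fst : ℂ)‖ ^ 2 + (1 - α) * ‖X z.snd‖ ^ 2 := by
    intro z
    have hz : T z = pr (X z.snd) 0 := hT z.fst z.snd
    have h1 : (inner ℂ (T z) z : ℂ) = inner ℂ (X z.snd) z.fst := by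
      have : (inner ℂ (pr (X z.snd) (0 : H)) (pr z.fst z.snd) : ℂ)
          = inner ℂ (X z.snd) z.fst + inner ℂ (0 : H) z.snd := inner_pr _ _ _ _
      rw [hz]
      rw [inner_zero_left, add_zero] at this; exact this
    have h2 : ‖T z‖ ^ 2 = ‖X z.snd‖ ^ 2 := by
      rw [hz, norm_pr_sq]; simp
    rw [h1, h2]
  -- upper bound
  have hub : ∀ r ∈ S, r ≤ ‖X‖ * Real.sqrt M := by
    rintro r ⟨z, hz, rfl⟩
    rw [hval z]
    set x := z.fst; set y := z.snd
    have hn : ‖x‖ ^ 2 + ‖y‖ ^ 2 = 1 := by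
      rw [← norm_pr_sq x y, pr_self z, hz]; norm_num
    have hy1 : ‖y‖ ^ 2 ≤ 1 := by nlinarith [sq_nonneg ‖x‖]
    have hXy : ‖X y‖ ≤ ‖X‖ * ‖y‖ := X.le_opNorm y
    have hinner : ‖(inner ℂ (X y) x : ℂ)‖ ^ 2 ≤ (‖X y‖ * ‖x‖) ^ 2 :=
      pow_le_pow_left₀ (norm_nonneg _) (norm_inner_le_norm _ _) 2
    have hmaxy := hmax (‖y‖ ^ 2) (sq_nonneg _) hy1
    have hE : α * ‖(inner ℂ (X y) x : ℂ)‖ ^ 2 + (1 - α) * ‖X y‖ ^ 2 ≤ ‖X‖ ^ 2 * M := by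
      have hxx : ‖x‖ ^ 2 = 1 - ‖y‖ ^ 2 := by linarith
      have e1 : α * ‖(inner ℂ (X y) x : ℂ)‖ ^ 2 ≤ α * (‖X y‖ ^ 2 * (1 - ‖y‖ ^ 2)) := by
        refine mul_le_mul_of_nonneg_left ?_ hα0
        calc ‖(inner ℂ (X y) x : ℂ)‖ ^ 2 ≤ (‖X y‖ * ‖x‖) ^ 2 := hinner
          _ = ‖X y‖ ^ 2 * (1 - ‖y‖ ^ 2) := by rw [mul_pow, hxx]
      have h1 : α * ‖(inner ℂ (X y) x : ℂ)‖ ^ 2 + (1 - α) * ‖X y‖ ^ 2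
          ≤ ‖X y‖ ^ 2 * (1 - α * ‖y‖ ^ 2) := by nlinarith [e1]
      have hc : 0 ≤ 1 - α * ‖y‖ ^ 2 := by nlinarith [sq_nonneg ‖y‖]
      have hN2 : ‖X y‖ ^ 2 ≤ ‖X‖ ^ 2 * ‖y‖ ^ 2 := by
        nlinarith [norm_nonneg (X y), norm_nonneg y, norm_nonneg X]
      have h2 : ‖X y‖ ^ 2 * (1 - α * ‖y‖ ^ 2) ≤ ‖X‖ ^ 2 * (‖y‖ ^ 2 * (1 - α * ‖y‖ ^ 2)) := by
        nlinarith [mul_le_mul_of_nonneg_right hN2 hc]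
      have h3 : ‖X‖ ^ 2 * (‖y‖ ^ 2 * (1 - α * ‖y‖ ^ 2)) ≤ ‖X‖ ^ 2 * M :=
        mul_le_mul_of_nonneg_left hmaxy (sq_nonneg _)
      linarith
    calc Real.sqrt (α * ‖(inner ℂ (X y) x : ℂ)‖ ^ 2 + (1 - α) * ‖X y‖ ^ 2)
        ≤ Real.sqrt (‖X‖ ^ 2 * M) := Real.sqrt_le_sqrt hE
      _ = ‖X‖ * Real.sqrt M := by
          rw [Real.sqrt_mul (sq_nonneg _), Real.sqrt_sq (norm_nonneg _)]
  -- S nonempty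
  obtain ⟨e, he⟩ := exists_ne (0 : H)
  have hu : ‖(‖e‖⁻¹ : ℂ) • e‖ = 1 := by
    rw [norm_smul]
    simp [norm_ne_zero_iff.2 he, inv_mul_cancel₀]
  set u : H := (‖e‖⁻¹ : ℂ) • e with hudef
  have hpru : ‖pr u (0 : H)‖ = 1 := by
    have h := norm_pr_sq u (0 : H)
    simp only [norm_zero, hu] at h
    nlinarith [norm_nonneg (pr u (0:H))]
  have hne : S.Nonempty := ⟨_, ⟨pr u 0, hpru, rfl⟩⟩
  have hbdd : BddAbove S := ⟨_, hub⟩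
  have h0 : (0 : ℝ) ≤ sSup S :=
    le_trans (Real.sqrt_nonneg _) (le_csSup hbdd ⟨pr u 0, hpru, rfl⟩)
  -- lower bound
  have hlow : ‖X‖ * Real.sqrt M ≤ sSup S := by
    have hclaim : ∀ y : H, ‖y‖ = 1 → ‖X y‖ * Real.sqrt M ≤ sSup S := by
      intro y hy
      rcases eq_or_ne (X y) 0 with hXy | hXy
      · rw [hXy, norm_zero, zero_mul]; exact h0
      · set t := ‖X y‖ with htdef
        have ht : 0 < t := norm_pos_iff.2 hXy
        set c₁ := Real.sqrt (1 - s₀) with hc₁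
        set c₂ := Real.sqrt s₀ with hc₂
        have hc₁sq : c₁ ^ 2 = 1 - s₀ := Real.sq_sqrt (by linarith)
        have hc₂sq : c₂ ^ 2 = s₀ := Real.sq_sqrt hs0
        have hc₁0 : 0 ≤ c₁ := Real.sqrt_nonneg _
        have hc₂0 : 0 ≤ c₂ := Real.sqrt_nonneg _
        set x₀ : H := ((c₁ / t : ℝ) : ℂ) • X y with hx₀
        set y₀ : H := ((c₂ : ℝ) : ℂ) • y with hy₀
        have hnx₀ : ‖x₀‖ = c₁ := by
          rw [hx₀, norm_smul, Complex.norm_real, Real.norm_eq_abs,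
            abs_of_nonneg (div_nonneg hc₁0 ht.le), ← htdef]
          field_simp
        have hny₀ : ‖y₀‖ = c₂ := by
          rw [hy₀, norm_smul, Complex.norm_real, Real.norm_eq_abs, abs_of_nonneg hc₂0, hy,
            mul_one]
        have hz1 : ‖pr x₀ y₀‖ = 1 := by
          have h := norm_pr_sq x₀ y₀
          rw [hnx₀, hny₀, hc₁sq, hc₂sq] at h
          nlinarith [norm_nonneg (pr x₀ y₀)]
        have hXy₀ : X y₀ = ((c₂ : ℝ) : ℂ) • X y := by rw [hy₀, map_smul]
        have hTz : T (pr x₀ y₀) = pr (((c₂ : ℝ) : ℂ) • X y) 0 := by rw [hT, hXy₀]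
        have hself : ‖(inner ℂ (X y) (X y) : ℂ)‖ = ‖X y‖ * ‖X y‖ := by
          rw [← inner_self_re_eq_norm, inner_self_eq_norm_mul_norm]
        have hinner : ‖(inner ℂ (T (pr x₀ y₀)) (pr x₀ y₀) : ℂ)‖ = c₂ * c₁ * t := by
          rw [hTz, inner_pr]
          simp only [inner_zero_left, add_zero, hx₀, inner_smul_left, inner_smul_right]
          rw [norm_mul, norm_mul, RCLike.norm_conj, Complex.norm_real, Complex.norm_real,
            hself, Real.norm_eq_abs, Real.norm_eq_abs, abs_of_nonneg hc₂0,
            abs_of_nonneg (div_nonneg hc₁0 ht.le), ← htdef]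
          field_simp
        have hnormTz : ‖T (pr x₀ y₀)‖ ^ 2 = (c₂ * t) ^ 2 := by
          rw [hTz, norm_pr_sq]
          simp only [norm_zero, norm_smul, Complex.norm_real, Real.norm_eq_abs,
            abs_of_nonneg hc₂0]
          ring
        have hmem : t * Real.sqrt M ∈ S := by
          refine ⟨pr x₀ y₀, hz1, ?_⟩
          rw [hinner, hnormTz]
          have harg : α * (c₂ * c₁ * t) ^ 2 + (1 - α) * (c₂ * t) ^ 2 = t ^ 2 * M := by
            have : (c₂ * c₁ * t) ^ 2 = s₀ * (1 - s₀) * t ^ 2 := by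
              rw [mul_pow, mul_pow, hc₁sq, hc₂sq]
            rw [this, mul_pow, hc₂sq, hMdef]; ring
          rw [harg, Real.sqrt_mul (sq_nonneg t), Real.sqrt_sq ht.le]
        exact le_csSup hbdd hmem
    have hXle : ‖X‖ ≤ sSup S / Real.sqrt M := by
      refine X.opNorm_le_bound (div_nonneg h0 hsqrtM.le) fun v => ?_
      rcases eq_or_ne v 0 with rfl | hv
      · simp
      · have hv0 : (0:ℝ) < ‖v‖ := norm_pos_iff.2 hv
        have hunit : ‖((‖v‖⁻¹ : ℝ) : ℂ) • v‖ = 1 := by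
          rw [norm_smul]
          simp [norm_ne_zero_iff.2 hv, inv_mul_cancel₀]
        have hcl := hclaim _ hunit
        rw [map_smul, norm_smul] at hcl
        have hnc : ‖((‖v‖⁻¹ : ℝ) : ℂ)‖ = ‖v‖⁻¹ := by
          rw [Complex.norm_real, Real.norm_eq_abs, abs_of_nonneg (inv_nonneg.2 hv0.le)]
        rw [hnc] at hcl
        rw [div_mul_eq_mul_div, le_div_iff₀ hsqrtM]
        have key2 : ‖v‖ * (‖v‖⁻¹ * ‖X v‖ * Real.sqrt M) = ‖X v‖ * Real.sqrt M := by
          field_simp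
        nlinarith [mul_le_mul_of_nonneg_left hcl hv0.le, key2]
    calc ‖X‖ * Real.sqrt M ≤ (sSup S / Real.sqrt M) * Real.sqrt M :=
          mul_le_mul_of_nonneg_right hXle hsqrtM.le
      _ = sSup S := div_mul_cancel₀ _ hsqrtM.ne'
  rw [halpha]
  exact le_antisymm (csSup_le hne hub) hlow

/-- Exact value of `‖[[0, X],[0, 0]]‖_α`: it equals `‖X‖/(2√α)` when `α > 1/2`, and
`√(1-α)·‖X‖` when `α ≤ 1/2`. -/
theorem alphaNorm_nilpotent_block (α : ℝ) (hα0 : 0 ≤ α) (hα1 : α ≤ 1) (X : H →L[ℂ] H)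
    (T : WithLp 2 (H × H) →L[ℂ] WithLp 2 (H × H))
    (hT : ∀ x y : H, T (pr x y) = pr (X y) 0) :
    (1 / 2 < α → alphaNorm α T = ‖X‖ / (2 * Real.sqrt α)) ∧
    (α ≤ 1 / 2 → alphaNorm α T = Real.sqrt (1 - α) * ‖X‖) := by
  rcases subsingleton_or_nontrivial H with hs | hn
  · haveI : Subsingleton (WithLp 2 (H × H)) := (WithLp.equiv 2 (H × H)).subsingleton
    have hX : ‖X‖ = 0 := by
      have : X = 0 := by ext v; exact Subsingleton.elim _ _
      rw [this, norm_zero]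
    have hempty : alphaNorm α T = 0 := by
      unfold alphaNorm
      convert Real.sSup_empty using 2
      ext r
      simp only [Set.mem_setOf_eq, Set.mem_empty_iff_false, iff_false]
      rintro ⟨x, hx, -⟩
      rw [Subsingleton.elim x 0, norm_zero] at hx
      norm_num at hx
    exact ⟨fun _ => by rw [hempty, hX, zero_div], fun _ => by rw [hempty, hX, mul_zero]⟩
  · constructor
    · intro h
      have hα : 0 < α := by linarith
      have e : (1/(2*α)) * (1 - α * (1/(2*α))) = 1/(4*α) := by field_simp; ring
      have hkey := key α hα0 hα1 X T hT (1/(2*α)) (by positivity)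
        (by rw [div_le_one (by linarith)]; linarith)
        (by rw [e]; positivity)
        (by
          intro s h0s h1s
          rw [e, le_div_iff₀ (by positivity)]
          nlinarith [sq_nonneg (2*α*s - 1)])
      rw [hkey, e]
      have h4 : Real.sqrt (1/(4*α)) = 1/(2*Real.sqrt α) := by
        rw [one_div, Real.sqrt_inv, show (4:ℝ)*α = 2^2*α by ring,
          Real.sqrt_mul (by positivity), Real.sqrt_sq (by norm_num), one_div]
      rw [h4, mul_one_div]
    · intro h
      have hkey := key α hα0 hα1 X T hT 1 zero_le_one le_rfl
        (by nlinarith)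
        (by
          intro s h0s h1s
          nlinarith [mul_nonneg (by linarith : (0:ℝ) ≤ 1 - s)
            (by nlinarith [mul_le_mul_of_nonneg_left h1s hα0] : (0:ℝ) ≤ 1 - α*(1+s))])
      rw [hkey, show (1:ℝ)*(1-α*1) = 1-α by ring, mul_comm]
end
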